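/- If every right-extension of a string w1 is also a right-extension of a string w2 (i.e., E_r(w1) ⊆ E_r(w2)), then sre(w1) ≤ sre(w2), where sre(w) is the number of supermaximal right-extensions of w. -/

import Mathlib

variable {α : Type*}

/-- `x` is a right-maximal substring of `w`. -/
def RightMaximal (w x : List α) : Prop :=
  ∃ a b : α, a ≠ b ∧ (x ++ [a]) <:+: w ∧ (x ++ [b]) <:+: w

/-- `y` is a right-extension of `w`. -/
def RightExt (w y : List α) : Prop :=
  ∃ (x : List α) (a : α), RightMaximal w x ∧ y = x ++ [a] ∧ y <:+: w

/-- `y` is a supermaximal right-extension of `w`: a right-extension that is not a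
proper suffix of any other right-extension. -/
def Supermaximal (w y : List α) : Prop :=
  RightExt w y ∧ ∀ z, RightExt w z → y <:+ z → z = y

/-- The number of supermaximal right-extensions of `w`. -/
noncomputable def sre (w : List α) : ℕ :=
  {y | Supermaximal w y}.ncard

lemma rightExt_finite (w : List α) : {y | RightExt w y}.Finite := by
  apply Set.Finite.subset (List.finite_toSet w.sublists)
  intro y hy
  obtain ⟨x, a, _, _, hinf⟩ := hy
  simpa [List.mem_sublists] using hinf.sublist

lemma exists_supermaximal_ext (w : List α) {y : List α} (hy : RightExt w y) :
    ∃ z, Supermaximal w z ∧ y <:+ z := by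
  set S : Set (List α) := {z | RightExt w z ∧ y <:+ z} with hS
  have hfin : S.Finite := (rightExt_finite w).subset (fun z hz => hz.1)
  have hne : S.Nonempty := ⟨y, hy, List.suffix_refl y⟩
  obtain ⟨z, hzS, hmax⟩ := hfin.exists_maximalFor List.length S hne
  refine ⟨z, ⟨hzS.1, ?_⟩, hzS.2⟩
  intro z' hz' hsuf
  have hz'S : z' ∈ S := ⟨hz', hzS.2.trans hsuf⟩
  have hlen := le_antisymm hsuf.length_le (hmax hz'S hsuf.length_le)
  exact (hsuf.sublist.eq_of_length hlen).symm

theorem sre_mono_of_rightExt_subset (w₁ w₂ : List α)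
    (h : ∀ y, RightExt w₁ y → RightExt w₂ y) : sre w₁ ≤ sre w₂ := by
  classical
  unfold sre
  set f : List α → List α := fun y =>
    if hy : ∃ z, Supermaximal w₂ z ∧ y <:+ z then hy.choose else y with hf
  have hfin₂ : {y | Supermaximal w₂ y}.Finite :=
    (rightExt_finite w₂).subset (fun z hz => hz.1)
  apply Set.ncard_le_ncard_of_injOn f ?_ ?_ hfin₂
  · intro y hy
    have hex : ∃ z, Supermaximal w₂ z ∧ y <:+ z :=
      exists_supermaximal_ext w₂ (h y hy.1)
    simp only [hf, Set.mem_setOf_eq, dif_pos hex]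
    exact hex.choose_spec.1
  · intro y hy y' hy' heq
    have hex : ∃ z, Supermaximal w₂ z ∧ y <:+ z :=
      exists_supermaximal_ext w₂ (h y hy.1)
    have hex' : ∃ z, Supermaximal w₂ z ∧ y' <:+ z :=
      exists_supermaximal_ext w₂ (h y' hy'.1)
    have h1 : y <:+ hex.choose := hex.choose_spec.2
    have h2 : y' <:+ hex.choose := by
      have : f y = hex.choose := by simp [hf, dif_pos hex]
      have : f y' = hex.choose := by rw [← heq, this]
      rw [← this]; simp only [hf, dif_pos hex']
      exact hex'.choose_spec.2
    rcases List.suffix_or_suffix_of_suffix h1 h2 with hs | hs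
    · exact (hy.2 y' hy'.1 hs).symm
    · exact hy'.2 y hy.1 hs
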